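/- Let 0 < α < 1 with α(1+α) ≠ 1, and consider the real-variable Sybil-gain function g : ℝ → ℝ, g(t) = (1 - (α(1+α))^{t+1}) / ((1+α)^{t} - α(1+α)^{t+1}). Then g attains its maximum over ℝ at the unique real number λ' determined by (α(1+α))^{λ'} = -log(1+α) / (α(1+α)·log α); i.e. g(t) ≤ g(λ') for all t ∈ ℝ, with g strictly increasing on (-∞, λ') and strictly decreasing on (λ', ∞). -/

import Mathlib

set_option maxHeartbeats 1000000 in
/-- The real-variable Sybil-gain function
`g(t) = (1 - (α(1+α))^{t+1}) / ((1+α)^t - α(1+α)^{t+1})` attains its maximum over ℝ at the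
unique real `λ'` with `(α(1+α))^{λ'} = -log(1+α)/(α(1+α)·log α)`; `g` is strictly increasing
on `(-∞, λ')` and strictly decreasing on `(λ', ∞)`. -/
theorem GCRM_sybil_gain_max (α : ℝ) (hα0 : 0 < α) (hα1 : α < 1)
    (hne : α * (1 + α) ≠ 1)
    (g : ℝ → ℝ)
    (hg : ∀ t : ℝ, g t =
      (1 - (α * (1 + α)) ^ (t + 1)) / ((1 + α) ^ t - α * (1 + α) ^ (t + 1))) :
    ∃ lam' : ℝ,
      (α * (1 + α)) ^ lam' = -Real.log (1 + α) / (α * (1 + α) * Real.log α) ∧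
      (∀ t : ℝ, (α * (1 + α)) ^ t = -Real.log (1 + α) / (α * (1 + α) * Real.log α) →
        t = lam') ∧
      (∀ t : ℝ, g t ≤ g lam') ∧
      StrictMonoOn g (Set.Iio lam') ∧
      StrictAntiOn g (Set.Ioi lam') := by
  have hb0 : (0:ℝ) < 1 + α := by linarith
  have hb1 : (1:ℝ) < 1 + α := by linarith
  set b : ℝ := 1 + α with hbdef
  set a : ℝ := α * b with hadef
  have ha0 : 0 < a := mul_pos hα0 hb0
  have hlb : 0 < Real.log b := Real.log_pos hb1
  have hlα : Real.log α < 0 := Real.log_neg hα0 hα1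
  have hla_eq : Real.log a = Real.log α + Real.log b :=
    Real.log_mul (ne_of_gt hα0) (ne_of_gt hb0)
  have hla_ne : Real.log a ≠ 0 := by
    intro h
    apply hne
    have h1 := Real.exp_log ha0
    rw [h, Real.exp_zero] at h1
    linarith [h1]
  have hane : (1:ℝ) - a ≠ 0 := sub_ne_zero.2 (Ne.symm hne)
  have halα : a * Real.log α < 0 := mul_neg_of_pos_of_neg ha0 hlα
  set R : ℝ := -Real.log b / (a * Real.log α) with hRdef
  have hR0 : 0 < R := div_pos_of_neg_of_neg (by linarith) halα
  set lam' : ℝ := Real.log R / Real.log a with hlamdef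
  have hE' : Real.exp (Real.log a * lam') = R := by
    rw [hlamdef, mul_comm, div_mul_cancel₀ _ hla_ne]
    exact Real.exp_log hR0
  have hpow : a ^ lam' = R := by
    rw [Real.rpow_def_of_pos ha0]; exact hE'
  -- the closed form of g
  set f : ℝ → ℝ := fun t =>
    (1 - a * Real.exp (Real.log a * t)) * Real.exp (-(Real.log b * t)) / (1 - a) with hfdef
  have hgf : g = f := by
    funext t
    rw [hg t]
    show _ = (1 - a * Real.exp (Real.log a * t)) * Real.exp (-(Real.log b * t)) / (1 - a)
    rw [Real.rpow_def_of_pos ha0, Real.rpow_def_of_pos hb0, Real.rpow_def_of_pos hb0]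
    have e1 : Real.exp (Real.log a * (t+1)) = a * Real.exp (Real.log a * t) := by
      rw [mul_add, mul_one, Real.exp_add, Real.exp_log ha0]; ring
    have e2 : Real.exp (Real.log b * (t+1)) = b * Real.exp (Real.log b * t) := by
      rw [mul_add, mul_one, Real.exp_add, Real.exp_log hb0]; ring
    rw [e1, e2]
    have e3 : Real.exp (Real.log b * t) - α * (b * Real.exp (Real.log b * t))
        = (1 - a) * Real.exp (Real.log b * t) := by rw [hadef]; ring
    rw [e3, Real.exp_neg, mul_comm (1 - a), ← div_div,
      div_eq_mul_inv (1 - a * Real.exp (Real.log a * t)) (Real.exp (Real.log b * t))]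
  subst hgf
  clear hg
  -- derivative
  have hrel : a * Real.log α * R = -Real.log b := by
    have hne2 : a * Real.log α ≠ 0 := ne_of_lt halα
    rw [hRdef]
    field_simp
    rw [div_self (ne_of_lt hlα)]
  set D : ℝ → ℝ := fun t =>
    Real.exp (-(Real.log b * t)) *
      (-(a * Real.log α) * (Real.exp (Real.log a * t) - R)) / (1 - a) with hDdef
  have hderiv : ∀ t : ℝ, HasDerivAt f (D t) t := by
    intro t
    have h0 : HasDerivAt (fun t : ℝ => Real.log a * t) (Real.log a) t := by
      simpa using (hasDerivAt_id t).const_mul (Real.log a)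
    have hE : HasDerivAt (fun t => Real.exp (Real.log a * t))
        (Real.exp (Real.log a * t) * Real.log a) t := h0.exp
    have h1 : HasDerivAt (fun t : ℝ => -(Real.log b * t)) (-Real.log b) t := by
      have := ((hasDerivAt_id t).const_mul (Real.log b)).neg
      simp only [mul_one] at this
      exact this
    have hB : HasDerivAt (fun t => Real.exp (-(Real.log b * t)))
        (Real.exp (-(Real.log b * t)) * -Real.log b) t := h1.exp
    have hnum : HasDerivAt (fun t => 1 - a * Real.exp (Real.log a * t))
        (-(a * (Real.exp (Real.log a * t) * Real.log a))) t := by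
      simpa using (hE.const_mul a).const_sub 1
    have hf : HasDerivAt f
        ((-(a * (Real.exp (Real.log a * t) * Real.log a)) * Real.exp (-(Real.log b * t)) +
          (1 - a * Real.exp (Real.log a * t)) * (Real.exp (-(Real.log b * t)) * -Real.log b))
          / (1 - a)) t := (hnum.mul hB).div_const (1 - a)
    have hval : (-(a * (Real.exp (Real.log a * t) * Real.log a)) * Real.exp (-(Real.log b * t)) +
          (1 - a * Real.exp (Real.log a * t)) * (Real.exp (-(Real.log b * t)) * -Real.log b))
          / (1 - a) = D t := by
      rw [hDdef]
      congr 1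
      linear_combination
        (-(a * Real.exp (Real.log a * t) * Real.exp (-(Real.log b * t)))) * hla_eq -
          Real.exp (-(Real.log b * t)) * hrel
    rw [hval] at hf
    exact hf
  have hcont : Continuous f := by
    have : Differentiable ℝ f := fun t => (hderiv t).differentiableAt
    exact this.continuous
  have hderiv' : ∀ t : ℝ, deriv f t = D t := fun t => (hderiv t).deriv
  -- sign of the derivative
  have hDpos : ∀ t : ℝ, t < lam' → 0 < D t := by
    intro t ht
    rw [hDdef]
    have hnum0 : 0 < -(a * Real.log α) := neg_pos.2 halα
    rcases hla_ne.lt_or_gt with h | h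
    · have ha1 : a < 1 := by
        by_contra hh
        push_neg at hh
        rcases eq_or_lt_of_le hh with h2 | h2
        · exact hla_ne (by rw [← h2, Real.log_one])
        · linarith [Real.log_pos h2]
      have hEE : Real.exp (Real.log a * lam') < Real.exp (Real.log a * t) :=
        Real.exp_lt_exp.2 (mul_lt_mul_of_neg_left ht h)
      rw [hE'] at hEE
      exact div_pos
        (mul_pos (Real.exp_pos _) (mul_pos hnum0 (by linarith))) (by linarith)
    · have ha1 : 1 < a := by
        by_contra hh
        push_neg at hh
        rcases eq_or_lt_of_le hh with h2 | h2
        · exact hla_ne (by rw [h2, Real.log_one])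
        · linarith [Real.log_neg ha0 h2]
      have hEE : Real.exp (Real.log a * t) < Real.exp (Real.log a * lam') :=
        Real.exp_lt_exp.2 (mul_lt_mul_of_pos_left ht h)
      rw [hE'] at hEE
      exact div_pos_of_neg_of_neg
        (mul_neg_of_pos_of_neg (Real.exp_pos _)
          (mul_neg_of_pos_of_neg hnum0 (by linarith))) (by linarith)
  have hDneg : ∀ t : ℝ, lam' < t → D t < 0 := by
    intro t ht
    rw [hDdef]
    have hnum0 : 0 < -(a * Real.log α) := neg_pos.2 halα
    rcases hla_ne.lt_or_gt with h | h
    · have ha1 : a < 1 := by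
        by_contra hh
        push_neg at hh
        rcases eq_or_lt_of_le hh with h2 | h2
        · exact hla_ne (by rw [← h2, Real.log_one])
        · linarith [Real.log_pos h2]
      have hEE : Real.exp (Real.log a * t) < Real.exp (Real.log a * lam') :=
        Real.exp_lt_exp.2 (mul_lt_mul_of_neg_left ht h)
      rw [hE'] at hEE
      exact div_neg_of_neg_of_pos
        (mul_neg_of_pos_of_neg (Real.exp_pos _)
          (mul_neg_of_pos_of_neg hnum0 (by linarith))) (by linarith)
    · have ha1 : 1 < a := by
        by_contra hh
        push_neg at hh
        rcases eq_or_lt_of_le hh with h2 | h2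
        · exact hla_ne (by rw [h2, Real.log_one])
        · linarith [Real.log_neg ha0 h2]
      have hEE : Real.exp (Real.log a * lam') < Real.exp (Real.log a * t) :=
        Real.exp_lt_exp.2 (mul_lt_mul_of_pos_left ht h)
      rw [hE'] at hEE
      exact div_neg_of_pos_of_neg
        (mul_pos (Real.exp_pos _) (mul_pos hnum0 (by linarith))) (by linarith)
  -- monotonicity on closed half-lines
  have hmono : StrictMonoOn f (Set.Iic lam') := by
    apply strictMonoOn_of_deriv_pos (convex_Iic lam') hcont.continuousOn
    intro x hx
    rw [interior_Iic] at hx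
    rw [hderiv' x]
    exact hDpos x hx
  have hanti : StrictAntiOn f (Set.Ici lam') := by
    apply strictAntiOn_of_deriv_neg (convex_Ici lam') hcont.continuousOn
    intro x hx
    rw [interior_Ici] at hx
    rw [hderiv' x]
    exact hDneg x hx
  refine ⟨lam', hpow, ?_, ?_, hmono.mono Set.Iio_subset_Iic_self,
    hanti.mono Set.Ioi_subset_Ici_self⟩
  · intro t ht
    have h1 : Real.exp (Real.log a * t) = Real.exp (Real.log a * lam') := by
      rw [hE', ← Real.rpow_def_of_pos ha0, ht]
    have h2 := Real.exp_injective h1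
    exact mul_left_cancel₀ hla_ne h2
  · intro t
    rcases lt_trichotomy t lam' with h | h | h
    · exact (hmono (Set.mem_Iic.2 h.le) (Set.mem_Iic.2 le_rfl) h).le
    · rw [h]
    · exact (hanti (Set.mem_Ici.2 le_rfl) (Set.mem_Ici.2 h.le) h).le
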